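/- Let (A_n) be a stationary sequence of topical operators with φ-mixing coefficients φ_n, and suppose for some n_0 we have φ_{n_0} + P(rk(A_{n_0}⋯A_1) ≠ 1) < 1. Then P(rk(A_n⋯A_1) ≠ 1) decreases exponentially fast in n; in particular Σ_n √(P(rk(A_{⌊n/2⌋}⋯A_1) ≠ 1)) < ∞. -/
import Mathlib


open MeasureTheory Filter

/-- A map on `ℝ^d` is *topical* if it is isotone and additively homogeneous. -/
def Topical (d : ℕ) (A : (Fin d → ℝ) → (Fin d → ℝ)) : Prop :=
  (∀ x y : Fin d → ℝ, x ≤ y → A x ≤ A y) ∧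
  (∀ (x : Fin d → ℝ) (a : ℝ), A (x + fun _ => a) = A x + fun _ => a)

/-- `compOp A s n = A_{s+n-1} ∘ ⋯ ∘ A_s`. -/
def compOp {d : ℕ} (A : ℕ → (Fin d → ℝ) → (Fin d → ℝ)) (s : ℕ) :
    ℕ → (Fin d → ℝ) → (Fin d → ℝ)
  | 0 => id
  | n + 1 => A (s + n) ∘ compOp A s n

/-- `θ` has rank 1: the induced map on `ℝ^d / ℝ·1` is constant. -/
def Rank1 (d : ℕ) (θ : (Fin d → ℝ) → (Fin d → ℝ)) : Prop :=
  ∀ x y : Fin d → ℝ, ∃ a : ℝ, θ x = θ y + fun _ => a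

/-- `pbad μ op n = P(rk(A_n ⋯ A_1) ≠ 1)` on the canonical sequence space, with
`A_m(ω) = op (ω m)`. -/
noncomputable def pbad {E : Type*} [MeasurableSpace E] (d : ℕ)
    (μ : Measure (ℕ → E)) (op : E → (Fin d → ℝ) → (Fin d → ℝ)) (n : ℕ) : ℝ :=
  (μ {ω | ¬ Rank1 d (compOp (fun m => op (ω m)) 1 n)}).toReal

section Aux
variable {d : ℕ}

lemma compOp_congr {A B : ℕ → (Fin d → ℝ) → (Fin d → ℝ)} {s : ℕ} (n : ℕ)
    (h : ∀ m, s ≤ m → m < s + n → A m = B m) : compOp A s n = compOp B s n := by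
  induction n with
  | zero => rfl
  | succ n ih =>
      simp only [compOp]
      rw [ih (fun m h1 h2 => h m h1 (by omega)), h (s + n) (by omega) (by omega)]

lemma compOp_add (A : ℕ → (Fin d → ℝ) → (Fin d → ℝ)) (s m k : ℕ) :
    compOp A s (m + k) = compOp A (s + m) k ∘ compOp A s m := by
  induction k with
  | zero => rfl
  | succ k ih =>
      show compOp A s (m + k + 1) = _
      have h1 : m + k + 1 = (m + k) + 1 := rfl
      simp only [compOp, ih]
      have h2 : s + (m + k) = s + m + k := by omega
      rw [h2]
      rfl

lemma compOp_shift (A : ℕ → (Fin d → ℝ) → (Fin d → ℝ)) (k s n : ℕ) :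
    compOp (fun m => A (m + k)) s n = compOp A (s + k) n := by
  induction n with
  | zero => rfl
  | succ n ih =>
      simp only [compOp, ih]
      have : s + n + k = s + k + n := by omega
      rw [this]

lemma compOp_homog {A : ℕ → (Fin d → ℝ) → (Fin d → ℝ)}
    (h : ∀ m x a, A m (x + fun _ => a) = A m x + fun _ => a) (s n : ℕ) :
    ∀ (x : Fin d → ℝ) (a : ℝ),
      compOp A s n (x + fun _ => a) = compOp A s n x + fun _ => a := by
  induction n with
  | zero => intro x a; rfl
  | succ n ih =>
      intro x a
      show A (s + n) (compOp A s n (x + fun _ => a)) = _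
      rw [ih, h]
      rfl

lemma rank1_comp_left {θ ψ : (Fin d → ℝ) → (Fin d → ℝ)} (h : Rank1 d ψ) :
    Rank1 d (ψ ∘ θ) := fun x y => h (θ x) (θ y)

lemma rank1_comp_right {θ ψ : (Fin d → ℝ) → (Fin d → ℝ)}
    (hψ : ∀ (x : Fin d → ℝ) (a : ℝ), ψ (x + fun _ => a) = ψ x + fun _ => a)
    (h : Rank1 d θ) : Rank1 d (ψ ∘ θ) := by
  intro x y
  obtain ⟨a, ha⟩ := h x y
  exact ⟨a, by simp only [Function.comp_apply, ha, hψ]⟩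

end Aux

/-- auxiliary: the bad event. -/
def badSet {E : Type*} (d : ℕ) (op : E → (Fin d → ℝ) → (Fin d → ℝ)) (s n : ℕ) :
    Set (ℕ → E) := {ω | ¬ Rank1 d (compOp (fun m => op (ω m)) s n)}


/-- If the sequence is stationary, `φ` bounds the `φ`-mixing coefficients, the rank-1
events are measurable with respect to the corresponding coordinate windows, and
`φ_{n₀} + P(rk(A_{n₀}⋯A_1) ≠ 1) < 1` for some `n₀`, then `P(rk(A_n⋯A_1) ≠ 1)`
decreases exponentially fast; in particular `Σ_n √(P(rk(A_{⌊n/2⌋}⋯A_1) ≠ 1)) < ∞`. -/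
theorem rank1_probability_exponential_decay {E : Type*} [MeasurableSpace E]
    {d : ℕ} [NeZero d]
    (μ : Measure (ℕ → E)) [IsProbabilityMeasure μ]
    (hshift : MeasurePreserving (fun ω (n : ℕ) => ω (n + 1)) μ μ)
    (op : E → (Fin d → ℝ) → (Fin d → ℝ)) (hop : ∀ e, Topical d (op e))
    (hmeas : ∀ s n : ℕ,
      MeasurableSet[MeasurableSpace.comap (fun ω (i : ℕ) => ω (s + i))
          inferInstance]
        {ω : ℕ → E | ¬ Rank1 d (compOp (fun m => op (ω m)) s n)})
    (φ : ℕ → ℝ) (hφ0 : ∀ n, 0 ≤ φ n)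
    (hφ : ∀ (k n : ℕ) (s t : Set (ℕ → E)),
      MeasurableSet[MeasurableSpace.comap (fun ω (i : Fin k) => ω i)
          inferInstance] s →
      MeasurableSet[MeasurableSpace.comap (fun ω (i : ℕ) => ω (k + n + i))
          inferInstance] t →
      |(μ (s ∩ t)).toReal - (μ s).toReal * (μ t).toReal| ≤ φ n * (μ s).toReal)
    (n0 : ℕ) (hn0 : φ n0 + pbad d μ op n0 < 1) :
    (∃ c r : ℝ, 0 < c ∧ 0 < r ∧ r < 1 ∧ ∀ n, pbad d μ op n ≤ c * r ^ n) ∧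
    Summable (fun n => Real.sqrt (pbad d μ op (n / 2))) := by
  -- basic measurability of bad sets
  have hSmeas : ∀ s n : ℕ, MeasurableSet (badSet d op s n) := by
    intro s n
    obtain ⟨B, hB, hBeq⟩ := hmeas s n
    have hf : Measurable (fun ω : ℕ → E => fun i : ℕ => ω (s + i)) :=
      measurable_pi_lambda _ (fun i => measurable_pi_apply _)
    have : badSet d op s n = (fun ω : ℕ → E => fun i : ℕ => ω (s + i)) ⁻¹' B := hBeq.symm
    rw [this]
    exact hf hB
  -- pbad as measure of bad set
  have hpbad : ∀ n, pbad d μ op n = (μ (badSet d op 1 n)).toReal := fun n => rfl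
  -- stationarity
  have hiter : ∀ (k : ℕ) (ω : ℕ → E) (m : ℕ),
      (fun ω (n : ℕ) => ω (n + 1))^[k] ω m = ω (m + k) := by
    intro k
    induction k with
    | zero => intro ω m; rfl
    | succ k ih =>
        intro ω m
        rw [Function.iterate_succ, Function.comp_apply, ih]
        rfl
  have hstat : ∀ k n : ℕ, μ (badSet d op (1 + k) n) = μ (badSet d op 1 n) := by
    intro k n
    have hset : badSet d op (1 + k) n
        = (fun ω (n : ℕ) => ω (n + 1))^[k] ⁻¹' badSet d op 1 n := by
      ext ω
      simp only [badSet, Set.mem_preimage, Set.mem_setOf_eq]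
      have heq : compOp (fun m => op ((fun ω (n : ℕ) => ω (n + 1))^[k] ω m)) 1 n
          = compOp (fun m => op (ω m)) (1 + k) n := by
        have h1 : (fun m => op ((fun ω (n : ℕ) => ω (n + 1))^[k] ω m))
            = fun m => (fun m' => op (ω m')) (m + k) := by
          funext m; rw [hiter]
        rw [h1]; exact compOp_shift (fun m' => op (ω m')) k 1 n
      rw [heq]
    rw [hset, (hshift.iterate k).measure_preimage (hSmeas 1 n).nullMeasurableSet]
  -- antitone
  have hsub1 : ∀ s n : ℕ, badSet d op s (n + 1) ⊆ badSet d op s n := by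
    intro s n ω hω hr
    exact hω (rank1_comp_right ((hop (ω (s + n))).2) hr)
  have hanti : ∀ m n : ℕ, m ≤ n → pbad d μ op n ≤ pbad d μ op m := by
    have h1 : ∀ n : ℕ, badSet d op 1 n ⊆ badSet d op 1 0 → True := fun _ _ => trivial
    intro m n hmn
    have hsub : badSet d op 1 n ⊆ badSet d op 1 m := by
      clear h1
      induction n with
      | zero => have : m = 0 := by omega
                subst this; exact subset_rfl
      | succ n ih =>
          rcases Nat.lt_or_ge m (n + 1) with h | h
          · exact (hsub1 1 n).trans (ih (by omega))
          · have : m = n + 1 := by omega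
            subst this; exact subset_rfl
    rw [hpbad, hpbad]
    exact ENNReal.toReal_mono (measure_ne_top μ _) (measure_mono hsub)
  have hp0 : ∀ n, 0 ≤ pbad d μ op n := fun n => ENNReal.toReal_nonneg
  have hp1 : ∀ n, pbad d μ op n ≤ 1 := by
    intro n
    rw [hpbad]
    calc (μ (badSet d op 1 n)).toReal ≤ (1 : ENNReal).toReal :=
          ENNReal.toReal_mono ENNReal.one_ne_top prob_le_one
      _ = 1 := by simp
  -- past measurability
  have hE : Nonempty (ℕ → E) := by
    by_contra h
    rw [not_nonempty_iff] at h
    have h1 := measure_univ (μ := μ)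
    rw [Set.univ_eq_empty_iff.mpr h, measure_empty] at h1
    exact zero_ne_one h1
  obtain ⟨ω0⟩ := hE
  have hpast : ∀ n : ℕ,
      MeasurableSet[MeasurableSpace.comap (fun ω (i : Fin (n + 1)) => ω i)
        inferInstance] (badSet d op 1 n) := by
    intro n
    set ext0 : (Fin (n + 1) → E) → ℕ → E :=
      fun v i => if h : i < n + 1 then v ⟨i, h⟩ else ω0 0 with hext0
    have hext_meas : Measurable ext0 := by
      apply measurable_pi_lambda
      intro i
      by_cases h : i < n + 1
      · simp only [hext0, dif_pos h]
        exact measurable_pi_apply _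
      · simp only [hext0, dif_neg h]
        exact measurable_const
    refine ⟨ext0 ⁻¹' badSet d op 1 n, hext_meas (hSmeas 1 n), ?_⟩
    ext ω
    simp only [Set.mem_preimage, badSet, Set.mem_setOf_eq]
    have heq : compOp (fun m => op (ext0 ((fun (i : Fin (n + 1)) => ω i)) m)) 1 n
        = compOp (fun m => op (ω m)) 1 n := by
      apply compOp_congr
      intro m h1 h2
      have hm : m < n + 1 := by omega
      simp only [hext0, dif_pos hm]
    rw [heq]
  -- key recursion
  have hrec : ∀ n, pbad d μ op (n + 2 * n0)
      ≤ (φ n0 + pbad d μ op n0) * pbad d μ op n := by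
    intro n
    set T := badSet d op (n + 1 + n0) n0 with hTdef
    have hT : MeasurableSet[MeasurableSpace.comap
        (fun ω (i : ℕ) => ω (n + 1 + n0 + i)) inferInstance] T :=
      hmeas (n + 1 + n0) n0
    have key := hφ (n + 1) n0 (badSet d op 1 n) T (hpast n) hT
    have hμT : (μ T).toReal = pbad d μ op n0 := by
      have h1 : n + 1 + n0 = 1 + (n + n0) := by omega
      rw [hTdef, h1, hstat (n + n0) n0, hpbad]
    have hincl : badSet d op 1 (n + 2 * n0) ⊆ badSet d op 1 n ∩ T := by
      intro ω hω
      constructor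
      · intro hr
        apply hω
        have hd : compOp (fun m => op (ω m)) 1 (n + 2 * n0)
            = compOp (fun m => op (ω m)) (1 + n) (2 * n0)
              ∘ compOp (fun m => op (ω m)) 1 n := compOp_add _ 1 n (2 * n0)
        rw [hd]
        exact rank1_comp_right (compOp_homog (fun m => (hop _).2) _ _) hr
      · intro hr
        apply hω
        have h1 : n + 2 * n0 = (n + n0) + n0 := by omega
        have h2 : 1 + (n + n0) = n + 1 + n0 := by omega
        rw [h1, compOp_add _ 1 (n + n0) n0, h2]
        exact rank1_comp_left hr
    have h2 : (μ (badSet d op 1 n ∩ T)).toReal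
        ≤ (μ (badSet d op 1 n)).toReal * (μ T).toReal
          + φ n0 * (μ (badSet d op 1 n)).toReal := by
      have := abs_le.mp key
      linarith [this.2]
    calc pbad d μ op (n + 2 * n0) = (μ (badSet d op 1 (n + 2 * n0))).toReal :=
          hpbad _
      _ ≤ (μ (badSet d op 1 n ∩ T)).toReal :=
          ENNReal.toReal_mono (measure_ne_top μ _) (measure_mono hincl)
      _ ≤ (μ (badSet d op 1 n)).toReal * (μ T).toReal
          + φ n0 * (μ (badSet d op 1 n)).toReal := h2
      _ = (φ n0 + pbad d μ op n0) * pbad d μ op n := by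
          rw [hμT, ← hpbad]; ring
  -- arithmetic conclusion
  have hmain : ∃ c r : ℝ, 0 < c ∧ 0 < r ∧ r < 1 ∧
      ∀ n, pbad d μ op n ≤ c * r ^ n := by
    have hq0 : 0 ≤ φ n0 + pbad d μ op n0 := add_nonneg (hφ0 n0) (hp0 n0)
    by_cases hz : n0 = 0
    · subst hz
      have hpz : ∀ n, pbad d μ op n = 0 := by
        intro n
        have h := hrec n
        simp only [Nat.mul_zero, Nat.add_zero] at h
        nlinarith [hp0 n]
      exact ⟨1, 1/2, one_pos, by norm_num, by norm_num,
        fun n => by rw [hpz n]; positivity⟩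
    · set m := 2 * n0 with hm
      have hm0 : 0 < m := by omega
      set Q := max (φ n0 + pbad d μ op n0) (1/2 : ℝ) with hQ
      have hQ0 : 0 < Q := lt_max_of_lt_right (by norm_num)
      have hQ1 : Q < 1 := max_lt hn0 (by norm_num)
      have hrecQ : ∀ n, pbad d μ op (n + m) ≤ Q * pbad d μ op n := fun n =>
        (hrec n).trans (mul_le_mul_of_nonneg_right (le_max_left _ _) (hp0 n))
      have hk : ∀ k, pbad d μ op (k * m) ≤ Q ^ k := by
        intro k
        induction k with
        | zero => simpa using hp1 0
        | succ k ih =>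
            have h1 : (k + 1) * m = k * m + m := by ring
            rw [h1, pow_succ]
            calc pbad d μ op (k * m + m) ≤ Q * pbad d μ op (k * m) := hrecQ _
              _ ≤ Q * Q ^ k := by nlinarith [hp0 (k * m)]
              _ = Q ^ k * Q := by ring
      have hkn : ∀ n, pbad d μ op n ≤ Q ^ (n / m) :=
        fun n => (hanti _ _ (Nat.div_mul_le_self n m)).trans (hk _)
      refine ⟨Q⁻¹, Q ^ ((m : ℝ)⁻¹), inv_pos.mpr hQ0,
        Real.rpow_pos_of_pos hQ0 _,
        Real.rpow_lt_one hQ0.le hQ1 (by positivity), ?_⟩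
      intro n
      have h5 : (0:ℝ) < m := by exact_mod_cast hm0
      have hexp : (n : ℝ) / (m : ℝ) - 1 ≤ ((n / m : ℕ) : ℝ) := by
        have h1 : n < m * (n / m) + m := by
          have h2 := Nat.div_add_mod n m
          have h3 := Nat.mod_lt n hm0
          omega
        have h4 : (n : ℝ) < (m : ℝ) * ((n / m : ℕ) : ℝ) + m := by exact_mod_cast h1
        have h6 : (n:ℝ)/m ≤ ((n / m : ℕ) : ℝ) + 1 := by
          rw [div_le_iff₀ h5]; nlinarith
        linarith
      calc pbad d μ op n ≤ Q ^ (n / m) := hkn n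
        _ = Q ^ (((n / m : ℕ)) : ℝ) := (Real.rpow_natCast Q _).symm
        _ ≤ Q ^ ((n : ℝ) / m - 1) :=
            Real.rpow_le_rpow_of_exponent_ge hQ0 hQ1.le hexp
        _ = Q⁻¹ * Q ^ ((n : ℝ) / m) := by
            rw [Real.rpow_sub hQ0, Real.rpow_one, div_eq_inv_mul]
        _ = Q⁻¹ * (Q ^ ((m : ℝ)⁻¹)) ^ n := by
            rw [← Real.rpow_natCast (Q ^ ((m : ℝ)⁻¹)) n, ← Real.rpow_mul hQ0.le]
            congr 1
            rw [inv_mul_eq_div]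
  refine ⟨hmain, ?_⟩
  obtain ⟨c, r, hc, hr0, hr1, hb⟩ := hmain
  have sqrt_pow' : ∀ (x : ℝ), 0 ≤ x → ∀ (k : ℕ),
      Real.sqrt (x ^ k) = Real.sqrt x ^ k := by
    intro x hx k
    induction k with
    | zero => simp
    | succ k ih => rw [pow_succ, pow_succ, Real.sqrt_mul (pow_nonneg hx k), ih]
  set v := Real.sqrt (Real.sqrt r) with hv
  have hv0 : 0 < v := Real.sqrt_pos.mpr (Real.sqrt_pos.mpr hr0)
  have hsr1 : Real.sqrt r < 1 := by
    calc Real.sqrt r < Real.sqrt 1 := Real.sqrt_lt_sqrt hr0.le hr1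
      _ = 1 := Real.sqrt_one
  have hv1 : v < 1 := by
    calc v < Real.sqrt 1 := Real.sqrt_lt_sqrt (Real.sqrt_nonneg r) hsr1
      _ = 1 := Real.sqrt_one
  have hbound : ∀ n, Real.sqrt (pbad d μ op (n / 2))
      ≤ (Real.sqrt c * v⁻¹) * v ^ n := by
    intro n
    have h1 : Real.sqrt (pbad d μ op (n / 2)) ≤ Real.sqrt (c * r ^ (n / 2)) :=
      Real.sqrt_le_sqrt (hb (n / 2))
    have h3 : Real.sqrt r = v ^ 2 := (Real.sq_sqrt (Real.sqrt_nonneg r)).symm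
    have h5 : v ^ (2 * (n / 2)) ≤ v ^ (n - 1) :=
      pow_le_pow_of_le_one hv0.le hv1.le (by omega)
    have h6 : v ^ (n - 1) ≤ v⁻¹ * v ^ n := by
      have h7 : v ^ ((n - 1) + 1) ≤ v ^ n :=
        pow_le_pow_of_le_one hv0.le hv1.le (by omega)
      calc v ^ (n - 1) = v⁻¹ * v ^ ((n - 1) + 1) := by
            rw [pow_succ' v (n - 1)]
            field_simp
        _ ≤ v⁻¹ * v ^ n := mul_le_mul_of_nonneg_left h7 (by positivity)
    calc Real.sqrt (pbad d μ op (n / 2))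
        ≤ Real.sqrt (c * r ^ (n / 2)) := h1
      _ = Real.sqrt c * Real.sqrt r ^ (n / 2) := by
          rw [Real.sqrt_mul hc.le, sqrt_pow' r hr0.le]
      _ = Real.sqrt c * v ^ (2 * (n / 2)) := by rw [h3, ← pow_mul]
      _ ≤ Real.sqrt c * v ^ (n - 1) :=
          mul_le_mul_of_nonneg_left h5 (Real.sqrt_nonneg c)
      _ ≤ Real.sqrt c * (v⁻¹ * v ^ n) :=
          mul_le_mul_of_nonneg_left h6 (Real.sqrt_nonneg c)
      _ = (Real.sqrt c * v⁻¹) * v ^ n := by ring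
  exact Summable.of_nonneg_of_le (fun n => Real.sqrt_nonneg _) hbound
    ((summable_geometric_of_lt_one hv0.le hv1).mul_left _)
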